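/- For every k ≥ 1 there exists a map φ from the alphabet {a₁, ā₁, …, a_k, ā_k} to words over {(, ), [, ]}, extended multiplicatively to a monoid homomorphism φ : words over {a₁, ā₁, …, a_k, ā_k} → words over {(, ), [, ]}, such that for every word w over {a₁, ā₁, …, a_k, ā_k}: w belongs to the Dyck-k language if and only if φ(w) belongs to the Dyck-2 language. -/
import Mathlib


/-- The alphabet {(, ), [, ]} of two types of parentheses. -/
inductive P2 where
  | lp : P2   -- '('
  | rp : P2   -- ')'
  | lb : P2   -- '['
  | rb : P2   -- ']'
deriving DecidableEq

/-- The Dyck-2 language over {(, ), [, ]}: the least set of words containing the empty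
word and closed under `w ↦ (w)`, `w ↦ [w]` and concatenation. -/
inductive Dyck2 : List P2 → Prop
  | nil : Dyck2 []
  | paren {w : List P2} : Dyck2 w → Dyck2 (P2.lp :: w ++ [P2.rp])
  | brack {w : List P2} : Dyck2 w → Dyck2 (P2.lb :: w ++ [P2.rb])
  | concat {u v : List P2} : Dyck2 u → Dyck2 v → Dyck2 (u ++ v)

/-- The Dyck-k language over the alphabet `Fin k × Bool`, where `(i, true)` is the
opening parenthesis `a_i` and `(i, false)` is the closing parenthesis `ā_i`: the least
set of words containing the empty word and closed under `w ↦ a_i w ā_i` and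
concatenation. -/
inductive DyckK (k : ℕ) : List (Fin k × Bool) → Prop
  | nil : DyckK k []
  | wrap (i : Fin k) {w : List (Fin k × Bool)} :
      DyckK k w → DyckK k ((i, true) :: w ++ [(i, false)])
  | concat {u v : List (Fin k × Bool)} : DyckK k u → DyckK k v → DyckK k (u ++ v)

namespace Stmt15Aux

/-- Stack machine for Dyck-2. Stack entries: `true` = pending `(`, `false` = pending `[`. -/
inductive Bal : List Bool → List P2 → Prop
  | nil : Bal [] []
  | lp {s w} : Bal (true :: s) w → Bal s (P2.lp :: w)
  | lb {s w} : Bal (false :: s) w → Bal s (P2.lb :: w)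
  | rp {s w} : Bal s w → Bal (true :: s) (P2.rp :: w)
  | rb {s w} : Bal s w → Bal (false :: s) (P2.rb :: w)

def close : Bool → P2
  | true => P2.rp
  | false => P2.rb

def Spec : List Bool → List P2 → Prop
  | [], w => Dyck2 w
  | b :: s, w => ∃ u v, Dyck2 u ∧ Spec s v ∧ w = u ++ close b :: v

lemma spec_cons {d s w} (hd : Dyck2 d) (h : Spec s w) : Spec s (d ++ w) := by
  cases s with
  | nil => exact Dyck2.concat hd h
  | cons b s =>
    obtain ⟨u, v, hu, hv, rfl⟩ := h
    exact ⟨d ++ u, v, Dyck2.concat hd hu, hv, by simp⟩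

lemma bal_spec {s w} (h : Bal s w) : Spec s w := by
  induction h with
  | nil => exact Dyck2.nil
  | lp h ih =>
    obtain ⟨u, v, hu, hv, rfl⟩ := ih
    have e : P2.lp :: (u ++ close true :: v) = (P2.lp :: u ++ [P2.rp]) ++ v := by
      simp [close]
    rw [e]
    exact spec_cons (Dyck2.paren hu) hv
  | lb h ih =>
    obtain ⟨u, v, hu, hv, rfl⟩ := ih
    have e : P2.lb :: (u ++ close false :: v) = (P2.lb :: u ++ [P2.rb]) ++ v := by
      simp [close]
    rw [e]
    exact spec_cons (Dyck2.brack hu) hv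
  | rp h ih => exact ⟨[], _, Dyck2.nil, ih, rfl⟩
  | rb h ih => exact ⟨[], _, Dyck2.nil, ih, rfl⟩

lemma dyck2_keep {u} (h : Dyck2 u) : ∀ {s w}, Bal s w → Bal s (u ++ w) := by
  induction h with
  | nil => exact fun h => h
  | @paren x hx ih =>
    intro s w h
    have e : (P2.lp :: x ++ [P2.rp]) ++ w = P2.lp :: (x ++ (P2.rp :: w)) := by simp
    rw [e]
    exact Bal.lp (ih (Bal.rp h))
  | @brack x hx ih =>
    intro s w h
    have e : (P2.lb :: x ++ [P2.rb]) ++ w = P2.lb :: (x ++ (P2.rb :: w)) := by simp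
    rw [e]
    exact Bal.lb (ih (Bal.rb h))
  | @concat a b ha hb iha ihb =>
    intro s w h
    rw [List.append_assoc]
    exact iha (ihb h)

lemma dyck2_iff_bal {w} : Dyck2 w ↔ Bal [] w := by
  constructor
  · intro h
    have := dyck2_keep h Bal.nil
    simpa using this
  · intro h
    exact bal_spec h

/-- Stack machine for Dyck-k. -/
inductive BalK (k : ℕ) : List (Fin k) → List (Fin k × Bool) → Prop
  | nil : BalK k [] []
  | push {s w} (i : Fin k) : BalK k (i :: s) w → BalK k s ((i, true) :: w)
  | pop {s w} (i : Fin k) : BalK k s w → BalK k (i :: s) ((i, false) :: w)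

def SpecK (k : ℕ) : List (Fin k) → List (Fin k × Bool) → Prop
  | [], w => DyckK k w
  | i :: s, w => ∃ u v, DyckK k u ∧ SpecK k s v ∧ w = u ++ (i, false) :: v

lemma specK_cons {k d s w} (hd : DyckK k d) (h : SpecK k s w) : SpecK k s (d ++ w) := by
  cases s with
  | nil => exact DyckK.concat hd h
  | cons i s =>
    obtain ⟨u, v, hu, hv, rfl⟩ := h
    exact ⟨d ++ u, v, DyckK.concat hd hu, hv, by simp⟩

lemma balK_spec {k s w} (h : BalK k s w) : SpecK k s w := by
  induction h with
  | nil => exact DyckK.nil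
  | push i h ih =>
    obtain ⟨u, v, hu, hv, rfl⟩ := ih
    have e : (i, true) :: (u ++ (i, false) :: v) = ((i, true) :: u ++ [(i, false)]) ++ v := by
      simp
    rw [e]
    exact specK_cons (DyckK.wrap i hu) hv
  | pop i h ih => exact ⟨[], _, DyckK.nil, ih, rfl⟩

lemma dyckK_keep {k u} (h : DyckK k u) : ∀ {s w}, BalK k s w → BalK k s (u ++ w) := by
  induction h with
  | nil => exact fun h => h
  | @wrap i x hx ih =>
    intro s w h
    have e : ((i, true) :: x ++ [(i, false)]) ++ w = (i, true) :: (x ++ ((i, false) :: w)) := by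
      simp
    rw [e]
    exact BalK.push i (ih (BalK.pop i h))
  | @concat a b ha hb iha ihb =>
    intro s w h
    rw [List.append_assoc]
    exact iha (ihb h)

lemma dyckK_iff_balK {k w} : DyckK k w ↔ BalK k [] w := by
  constructor
  · intro h
    have := dyckK_keep h BalK.nil
    simpa using this
  · intro h
    exact balK_spec h

/-- The encoding. -/
def phi (k : ℕ) : Fin k × Bool → List P2
  | (i, true) => P2.lp :: List.replicate (i.val + 1) P2.lb
  | (i, false) => List.replicate (i.val + 1) P2.rb ++ [P2.rp]

def enc {k : ℕ} (s : List (Fin k)) : List Bool :=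
  (s.map fun i => List.replicate (i.val + 1) false ++ [true]).flatten

@[simp] lemma enc_nil {k : ℕ} : enc (k := k) [] = [] := rfl

@[simp] lemma enc_cons {k : ℕ} (i : Fin k) (s : List (Fin k)) :
    enc (i :: s) = List.replicate (i.val + 1) false ++ true :: enc s := by
  simp [enc]

lemma bal_lb_rep : ∀ (n : ℕ) {s w}, Bal (List.replicate n false ++ s) w →
    Bal s (List.replicate n P2.lb ++ w) := by
  intro n
  induction n with
  | zero => exact fun h => h
  | succ n ih =>
    intro s w h
    have e : List.replicate (n + 1) false ++ s = List.replicate n false ++ false :: s := by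
      rw [List.replicate_succ']; simp
    rw [e] at h
    simp only [List.replicate_succ, List.cons_append]
    exact Bal.lb (ih h)

lemma bal_rb_rep : ∀ (n : ℕ) {s w}, Bal s w →
    Bal (List.replicate n false ++ s) (List.replicate n P2.rb ++ w) := by
  intro n
  induction n with
  | zero => exact fun h => h
  | succ n ih =>
    intro s w h
    simp only [List.replicate_succ, List.cons_append]
    exact Bal.rb (ih h)

lemma bal_lb_rep_inv : ∀ (n : ℕ) {s w}, Bal s (List.replicate n P2.lb ++ w) →
    Bal (List.replicate n false ++ s) w := by
  intro n
  induction n with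
  | zero => exact fun h => h
  | succ n ih =>
    intro s w h
    simp only [List.replicate_succ, List.cons_append] at h
    cases h with
    | lb h =>
      have e : List.replicate (n + 1) false ++ s = List.replicate n false ++ false :: s := by
        rw [List.replicate_succ']; simp
      rw [e]
      exact ih h

lemma peel : ∀ (n : ℕ) {m : ℕ} {t : List Bool} {w},
    Bal (List.replicate m false ++ true :: t) (List.replicate n P2.rb ++ P2.rp :: w) →
    m = n ∧ Bal t w := by
  intro n
  induction n with
  | zero =>
    intro m t w h
    cases m with
    | zero =>
      simp only [List.replicate, List.nil_append] at h
      cases h with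
      | rp h => exact ⟨rfl, h⟩
    | succ m =>
      simp only [List.replicate_succ, List.cons_append, List.nil_append] at h
      cases h
  | succ n ih =>
    intro m t w h
    cases m with
    | zero =>
      simp only [List.replicate_succ, List.replicate, List.cons_append, List.nil_append] at h
      cases h
    | succ m =>
      simp only [List.replicate_succ, List.cons_append] at h
      cases h with
      | rb h =>
        obtain ⟨rfl, hb⟩ := ih h
        exact ⟨rfl, hb⟩

lemma bal_nil : ∀ {s}, Bal s [] → s = [] := by
  intro s h
  cases h
  rfl

lemma balK_to_bal {k s w} (h : BalK k s w) : Bal (enc s) ((w.map (phi k)).flatten) := by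
  induction h with
  | nil => exact Bal.nil
  | @push s' w' i h ih =>
    simp only [List.map_cons, List.flatten_cons, phi, List.cons_append]
    rw [enc_cons] at ih
    exact Bal.lp (bal_lb_rep _ ih)
  | pop i h ih =>
    simp only [List.map_cons, List.flatten_cons, phi, enc_cons, List.append_assoc,
      List.singleton_append]
    exact bal_rb_rep _ (Bal.rp ih)

lemma bal_to_balK {k} : ∀ (w : List (Fin k × Bool)) (s : List (Fin k)),
    Bal (enc s) ((w.map (phi k)).flatten) → BalK k s w := by
  intro w
  induction w with
  | nil =>
    intro s h
    simp only [List.map_nil, List.flatten_nil] at h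
    have hs : enc s = [] := bal_nil h
    cases s with
    | nil => exact BalK.nil
    | cons i s => simp [List.replicate_succ] at hs
  | cons x t ih =>
    intro s h
    obtain ⟨i, b⟩ := x
    cases b with
    | true =>
      simp only [List.map_cons, List.flatten_cons, phi, List.cons_append] at h
      generalize hs : enc s = es at h
      cases h with
      | lp h =>
        have h2 := bal_lb_rep_inv _ h
        have h3 : Bal (enc (i :: s)) ((t.map (phi k)).flatten) := by
          rw [enc_cons, hs]; exact h2
        exact BalK.push i (ih _ h3)
    | false =>
      simp only [List.map_cons, List.flatten_cons, phi, List.append_assoc,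
        List.singleton_append] at h
      cases s with
      | nil =>
        rw [enc_nil] at h
        simp only [List.replicate_succ, List.cons_append] at h
        cases h
      | cons j s =>
        rw [enc_cons] at h
        obtain ⟨hm, hb⟩ := peel _ h
        have hij : j = i := Fin.ext (Nat.succ_injective hm)
        subst hij
        exact BalK.pop j (ih _ hb)

end Stmt15Aux

/-- For every `k ≥ 1` there is a homomorphism `φ` from the Dyck-k alphabet to words
over the Dyck-2 alphabet such that a word is in Dyck-k iff its `φ`-image is in
Dyck-2. -/
theorem stmt15 (k : ℕ) (hk : 1 ≤ k) :
    ∃ φ : Fin k × Bool → List P2,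
      ∀ w : List (Fin k × Bool), DyckK k w ↔ Dyck2 ((w.map φ).flatten) := by
  refine ⟨Stmt15Aux.phi k, fun w => ?_⟩
  rw [Stmt15Aux.dyckK_iff_balK, Stmt15Aux.dyck2_iff_bal]
  constructor
  · intro h
    simpa using Stmt15Aux.balK_to_bal h
  · intro h
    exact Stmt15Aux.bal_to_balK w [] (by simpa using h)
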